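/- Stability of the SBP-P-SAT scheme: in the two-block SBP setting, let w : ℝ → ℝ^N be twice continuously differentiable with w''(t) = D w(t) + E w'(t) for all t, and define the discrete energy 𝔈(t) = w'(t)ᵀ H̄ w'(t) + c² Σ_{σ∈{+,−}} [ (D_x^σ ṽ^σ(t))ᵀ H^σ (D_x^σ ṽ^σ(t)) + (D_y^σ ṽ^σ(t))ᵀ H^σ (D_y^σ ṽ^σ(t)) + ṽ^σ(t)ᵀ R^σ ṽ^σ(t) ], where ṽ(t) = P w(t) and ṽ^σ denotes its block σ. Then 𝔈'(t) = −2c Σ_{σ∈{+,−}} Σ_{k∈{w,e}} (e_k^σ (P w'(t))^σ)ᵀ H_k^σ (e_k^σ (P w'(t))^σ) for all t; in particular, if c ≥ 0, R⁺ and R⁻ are positive semidefinite, and H_k⁺, H_k⁻ are positive semidefinite for k ∈ {w,e}, then 𝔈 is nonnegative and nonincreasing. -/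

import Mathlib

open Matrix

private lemma aux_mulVec {ι κ : Type*} [Fintype ι] (M : Matrix κ ι ℝ) {f : ℝ → ι → ℝ}
    {f' : ι → ℝ} {t : ℝ} (hf : ∀ j, HasDerivAt (fun s => f s j) (f' j) t) (i : κ) :
    HasDerivAt (fun s => (M *ᵥ f s) i) ((M *ᵥ f') i) t := by
  simpa [mulVec, dotProduct] using
    HasDerivAt.fun_sum (fun j _ => ((hf j).const_mul (M i j)))

private lemma aux_dot {ι : Type*} [Fintype ι] (M : Matrix ι ι ℝ) {f g : ℝ → ι → ℝ}
    {f' g' : ι → ℝ} {t : ℝ} (hf : ∀ i, HasDerivAt (fun s => f s i) (f' i) t)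
    (hg : ∀ i, HasDerivAt (fun s => g s i) (g' i) t) :
    HasDerivAt (fun s => f s ⬝ᵥ M *ᵥ g s) (f' ⬝ᵥ M *ᵥ g t + f t ⬝ᵥ M *ᵥ g') t := by
  have h := HasDerivAt.fun_sum (fun i (_ : i ∈ Finset.univ) =>
    (hf i).mul (aux_mulVec M hg i))
  simpa [dotProduct, Finset.sum_add_distrib] using h

private lemma dot_fromBlocks {n₁ n₂ m₁ m₂ : Type*} [Fintype n₁] [Fintype n₂] [Fintype m₁]
    [Fintype m₂]
    (A : Matrix m₁ n₁ ℝ) (B : Matrix m₁ n₂ ℝ) (C : Matrix m₂ n₁ ℝ) (D : Matrix m₂ n₂ ℝ)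
    (u : m₁ ⊕ m₂ → ℝ) (v : n₁ ⊕ n₂ → ℝ) :
    u ⬝ᵥ (fromBlocks A B C D) *ᵥ v =
      (u ∘ Sum.inl) ⬝ᵥ A *ᵥ (v ∘ Sum.inl) + (u ∘ Sum.inl) ⬝ᵥ B *ᵥ (v ∘ Sum.inr)
      + (u ∘ Sum.inr) ⬝ᵥ C *ᵥ (v ∘ Sum.inl) + (u ∘ Sum.inr) ⬝ᵥ D *ᵥ (v ∘ Sum.inr) := by
  nth_rewrite 1 [show v = Sum.elim (v ∘ Sum.inl) (v ∘ Sum.inr) from (Sum.elim_comp_inl_inr v).symm]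
  nth_rewrite 1 [show u = Sum.elim (u ∘ Sum.inl) (u ∘ Sum.inr) from (Sum.elim_comp_inl_inr u).symm]
  rw [fromBlocks_mulVec, sumElim_dotProduct_sumElim, dotProduct_add, dotProduct_add]
  simp [Sum.elim_comp_inl, Sum.elim_comp_inr]
  ring

private lemma dot_triple {m n n₂ : Type*} [Fintype m] [Fintype n] [Fintype n₂]
    (E : Matrix m n ℝ) (Hk : Matrix m m ℝ) (d : Matrix m n₂ ℝ) (u : n → ℝ) (v : n₂ → ℝ) :
    u ⬝ᵥ (Eᵀ * Hk * d) *ᵥ v = (E *ᵥ u) ⬝ᵥ Hk *ᵥ (d *ᵥ v) := by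
  rw [← mulVec_mulVec, ← mulVec_mulVec, dotProduct_mulVec, vecMul_transpose]

private lemma dot_symm {n : Type*} [Fintype n] {M : Matrix n n ℝ} (hM : M.IsSymm)
    (u v : n → ℝ) : u ⬝ᵥ M *ᵥ v = v ⬝ᵥ M *ᵥ u := by
  rw [dotProduct_mulVec, ← mulVec_transpose, hM.eq, dotProduct_comm]

private lemma psd_nonneg {n : Type*} [Fintype n] {M : Matrix n n ℝ} (hM : M.PosSemidef)
    (x : n → ℝ) : 0 ≤ x ⬝ᵥ M *ᵥ x := by
  simpa using hM.dotProduct_mulVec_nonneg x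

/-- Stability of the SBP-P-SAT scheme: the discrete energy dissipates only through the
west/east boundary terms, and under the semidefiniteness assumptions it is nonnegative
and nonincreasing. -/
theorem twoBlock_energy_stability
    {Np Nm : ℕ} (hNp : 0 < Np) (hNm : 0 < Nm)
    {mwp mep msp mnp mwm mem msm : ℕ}
    (hmwp : 0 < mwp) (hmep : 0 < mep) (hmsp : 0 < msp) (hmnp : 0 < mnp)
    (hmwm : 0 < mwm) (hmem : 0 < mem) (hmsm : 0 < msm)
    (Hp DLp Dxp Dyp Rp : Matrix (Fin Np) (Fin Np) ℝ)
    (Hm DLm Dxm Dym Rm : Matrix (Fin Nm) (Fin Nm) ℝ)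
    (hHp : Hp.PosDef) (hHm : Hm.PosDef) (hRp : Rp.IsSymm) (hRm : Rm.IsSymm)
    (ewp dwp : Matrix (Fin mwp) (Fin Np) ℝ) (Hwp : Matrix (Fin mwp) (Fin mwp) ℝ)
    (eep dep : Matrix (Fin mep) (Fin Np) ℝ) (Hep : Matrix (Fin mep) (Fin mep) ℝ)
    (esp dsp : Matrix (Fin msp) (Fin Np) ℝ) (Hsp : Matrix (Fin msp) (Fin msp) ℝ)
    (enp dnp : Matrix (Fin mnp) (Fin Np) ℝ) (Hnp : Matrix (Fin mnp) (Fin mnp) ℝ)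
    (ewm dwm : Matrix (Fin mwm) (Fin Nm) ℝ) (Hwm : Matrix (Fin mwm) (Fin mwm) ℝ)
    (eem dem : Matrix (Fin mem) (Fin Nm) ℝ) (Hem : Matrix (Fin mem) (Fin mem) ℝ)
    (esm dsm : Matrix (Fin msm) (Fin Nm) ℝ) (Hsm : Matrix (Fin msm) (Fin msm) ℝ)
    -- interface matching: m_n⁻ = m_s⁺ (same row dimension) and H_n⁻ = H_s⁺
    (enm dnm : Matrix (Fin msp) (Fin Nm) ℝ) (Hnm : Matrix (Fin msp) (Fin msp) ℝ)
    (hHwp : Hwp.IsSymm) (hHep : Hep.IsSymm) (hHsp : Hsp.IsSymm) (hHnp : Hnp.IsSymm)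
    (hHwm : Hwm.IsSymm) (hHem : Hem.IsSymm) (hHsm : Hsm.IsSymm) (hHnm : Hnm.IsSymm)
    (hmatch : Hsp = Hnm)
    (hSBPp : ∀ u v : Fin Np → ℝ,
      u ⬝ᵥ (Hp * DLp) *ᵥ v =
        -((Dxp *ᵥ u) ⬝ᵥ Hp *ᵥ (Dxp *ᵥ v)) - ((Dyp *ᵥ u) ⬝ᵥ Hp *ᵥ (Dyp *ᵥ v))
        - u ⬝ᵥ Rp *ᵥ v
        + (ewp *ᵥ u) ⬝ᵥ Hwp *ᵥ (dwp *ᵥ v) + (eep *ᵥ u) ⬝ᵥ Hep *ᵥ (dep *ᵥ v)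
        + (esp *ᵥ u) ⬝ᵥ Hsp *ᵥ (dsp *ᵥ v) + (enp *ᵥ u) ⬝ᵥ Hnp *ᵥ (dnp *ᵥ v))
    (hSBPm : ∀ u v : Fin Nm → ℝ,
      u ⬝ᵥ (Hm * DLm) *ᵥ v =
        -((Dxm *ᵥ u) ⬝ᵥ Hm *ᵥ (Dxm *ᵥ v)) - ((Dym *ᵥ u) ⬝ᵥ Hm *ᵥ (Dym *ᵥ v))
        - u ⬝ᵥ Rm *ᵥ v
        + (ewm *ᵥ u) ⬝ᵥ Hwm *ᵥ (dwm *ᵥ v) + (eem *ᵥ u) ⬝ᵥ Hem *ᵥ (dem *ᵥ v)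
        + (esm *ᵥ u) ⬝ᵥ Hsm *ᵥ (dsm *ᵥ v) + (enm *ᵥ u) ⬝ᵥ Hnm *ᵥ (dnm *ᵥ v))
    (c : ℝ)
    (Hbar : Matrix (Fin Np ⊕ Fin Nm) (Fin Np ⊕ Fin Nm) ℝ)
    (hHbar : Hbar = fromBlocks Hp 0 0 Hm)
    (L : Matrix (Fin mnp ⊕ Fin msp) (Fin Np ⊕ Fin Nm) ℝ)
    (hL : L = fromBlocks enp 0 esp (-enm))
    (hLHL : IsUnit (L * Hbar⁻¹ * Lᵀ))
    (P : Matrix (Fin Np ⊕ Fin Nm) (Fin Np ⊕ Fin Nm) ℝ)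
    (hP : P = 1 - Hbar⁻¹ * Lᵀ * (L * Hbar⁻¹ * Lᵀ)⁻¹ * L)
    (SATBC1 SATBC2 SATIC : Matrix (Fin Np ⊕ Fin Nm) (Fin Np ⊕ Fin Nm) ℝ)
    (hSATBC1 : SATBC1 = -(Hbar⁻¹ *
      (fromBlocks (ewpᵀ * Hwp * dwp) 0 0 (ewmᵀ * Hwm * dwm)
        + fromBlocks (eepᵀ * Hep * dep) 0 0 (eemᵀ * Hem * dem)
        + fromBlocks 0 0 0 (esmᵀ * Hsm * dsm))))
    (hSATIC : SATIC = -(Hbar⁻¹ *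
      fromBlocks (espᵀ * Hsp * dsp) (espᵀ * Hsp * dnm) 0 0))
    (hSATBC2 : SATBC2 = -(Hbar⁻¹ *
      (fromBlocks (ewpᵀ * Hwp * ewp) 0 0 (ewmᵀ * Hwm * ewm)
        + fromBlocks (eepᵀ * Hep * eep) 0 0 (eemᵀ * Hem * eem))))
    (D E : Matrix (Fin Np ⊕ Fin Nm) (Fin Np ⊕ Fin Nm) ℝ)
    (hD : D = (c ^ 2) • (P * (fromBlocks DLp 0 0 DLm + SATBC1 + SATIC) * P))
    (hE : E = c • (P * SATBC2 * P))
    (w : ℝ → Fin Np ⊕ Fin Nm → ℝ) (hw : ContDiff ℝ 2 w)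
    (hode : ∀ t : ℝ, deriv (deriv w) t = D *ᵥ w t + E *ᵥ deriv w t)
    (En : ℝ → ℝ)
    (hEn : En = fun t =>
      (deriv w t) ⬝ᵥ Hbar *ᵥ (deriv w t)
      + c ^ 2 *
        (((Dxp *ᵥ ((P *ᵥ w t) ∘ Sum.inl)) ⬝ᵥ Hp *ᵥ (Dxp *ᵥ ((P *ᵥ w t) ∘ Sum.inl))
          + (Dyp *ᵥ ((P *ᵥ w t) ∘ Sum.inl)) ⬝ᵥ Hp *ᵥ (Dyp *ᵥ ((P *ᵥ w t) ∘ Sum.inl))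
          + ((P *ᵥ w t) ∘ Sum.inl) ⬝ᵥ Rp *ᵥ ((P *ᵥ w t) ∘ Sum.inl))
        + ((Dxm *ᵥ ((P *ᵥ w t) ∘ Sum.inr)) ⬝ᵥ Hm *ᵥ (Dxm *ᵥ ((P *ᵥ w t) ∘ Sum.inr))
          + (Dym *ᵥ ((P *ᵥ w t) ∘ Sum.inr)) ⬝ᵥ Hm *ᵥ (Dym *ᵥ ((P *ᵥ w t) ∘ Sum.inr))
          + ((P *ᵥ w t) ∘ Sum.inr) ⬝ᵥ Rm *ᵥ ((P *ᵥ w t) ∘ Sum.inr)))) :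
    (∀ t : ℝ,
      deriv En t =
        -(2 * c) *
          ((ewp *ᵥ ((P *ᵥ deriv w t) ∘ Sum.inl)) ⬝ᵥ Hwp *ᵥ (ewp *ᵥ ((P *ᵥ deriv w t) ∘ Sum.inl))
          + (eep *ᵥ ((P *ᵥ deriv w t) ∘ Sum.inl)) ⬝ᵥ Hep *ᵥ (eep *ᵥ ((P *ᵥ deriv w t) ∘ Sum.inl))
          + (ewm *ᵥ ((P *ᵥ deriv w t) ∘ Sum.inr)) ⬝ᵥ Hwm *ᵥ (ewm *ᵥ ((P *ᵥ deriv w t) ∘ Sum.inr))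
          + (eem *ᵥ ((P *ᵥ deriv w t) ∘ Sum.inr)) ⬝ᵥ Hem *ᵥ (eem *ᵥ ((P *ᵥ deriv w t) ∘ Sum.inr)))) ∧
    (0 ≤ c → Rp.PosSemidef → Rm.PosSemidef →
      Hwp.PosSemidef → Hep.PosSemidef → Hwm.PosSemidef → Hem.PosSemidef →
      (∀ t : ℝ, 0 ≤ En t) ∧ Antitone En) := by
  
  -- symmetry facts
  have hHpT : Hpᵀ = Hp := by
    simpa [conjTranspose_eq_transpose_of_trivial] using hHp.1.eq
  have hHmT : Hmᵀ = Hm := by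
    simpa [conjTranspose_eq_transpose_of_trivial] using hHm.1.eq
  have hHbarT : Hbarᵀ = Hbar := by
    rw [hHbar, fromBlocks_transpose, transpose_zero, transpose_zero, hHpT, hHmT]
  have hHbarSym : Hbar.IsSymm := hHbarT
  have hdet : IsUnit Hbar.det := by
    rw [hHbar, det_fromBlocks_zero₂₁]
    exact isUnit_iff_ne_zero.mpr (mul_pos hHp.det_pos hHm.det_pos).ne'
  have hdLHL : IsUnit (L * Hbar⁻¹ * Lᵀ).det := (isUnit_iff_isUnit_det _).mp hLHL
  have hinvT : (Hbar⁻¹)ᵀ = Hbar⁻¹ := by rw [transpose_nonsing_inv, hHbarT]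
  have hST : ((L * Hbar⁻¹ * Lᵀ)⁻¹)ᵀ = (L * Hbar⁻¹ * Lᵀ)⁻¹ := by
    rw [transpose_nonsing_inv]
    congr 1
    rw [transpose_mul, transpose_mul, transpose_transpose, hinvT, Matrix.mul_assoc]
  -- key matrix identities
  have key1 : Hbar * P = Pᵀ * Hbar := by
    have e1 : Hbar * P = Hbar - Lᵀ * (L * Hbar⁻¹ * Lᵀ)⁻¹ * L := by
      rw [hP, Matrix.mul_sub, Matrix.mul_one]
      simp only [← Matrix.mul_assoc]
      rw [mul_nonsing_inv _ hdet, Matrix.one_mul]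
    have e2 : Pᵀ * Hbar = Hbar - Lᵀ * (L * Hbar⁻¹ * Lᵀ)⁻¹ * L := by
      rw [hP, transpose_sub, transpose_one, Matrix.sub_mul, Matrix.one_mul]
      simp only [transpose_mul, transpose_transpose, hST, hinvT]
      simp only [Matrix.mul_assoc]
      rw [nonsing_inv_mul _ hdet, Matrix.mul_one]
    rw [e1, e2]
  have key2 : L * P = 0 := by
    rw [hP, Matrix.mul_sub, Matrix.mul_one]
    simp only [← Matrix.mul_assoc]
    rw [mul_nonsing_inv _ hdLHL, Matrix.one_mul, sub_self]
  -- interface relations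
  have hIface : ∀ z : Fin Np ⊕ Fin Nm → ℝ,
      enp *ᵥ ((P *ᵥ z) ∘ Sum.inl) = 0 ∧
      esp *ᵥ ((P *ᵥ z) ∘ Sum.inl) = enm *ᵥ ((P *ᵥ z) ∘ Sum.inr) := by
    intro z
    have h0 : L *ᵥ (P *ᵥ z) = 0 := by
      rw [mulVec_mulVec, key2, zero_mulVec]
    rw [show (P *ᵥ z) = Sum.elim ((P *ᵥ z) ∘ Sum.inl) ((P *ᵥ z) ∘ Sum.inr) from
      (Sum.elim_comp_inl_inr _).symm, hL, fromBlocks_mulVec] at h0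
    constructor
    · funext i
      have := congrFun h0 (Sum.inl i)
      simpa using this
    · funext i
      have := congrFun h0 (Sum.inr i)
      simp [Matrix.neg_mulVec] at this
      linarith
  -- the D-part identity
  have hDpart : ∀ x y : Fin Np ⊕ Fin Nm → ℝ,
      y ⬝ᵥ Hbar *ᵥ (D *ᵥ x) =
        -(c ^ 2) *
          ((Dxp *ᵥ ((P *ᵥ y) ∘ Sum.inl)) ⬝ᵥ Hp *ᵥ (Dxp *ᵥ ((P *ᵥ x) ∘ Sum.inl))
          + (Dyp *ᵥ ((P *ᵥ y) ∘ Sum.inl)) ⬝ᵥ Hp *ᵥ (Dyp *ᵥ ((P *ᵥ x) ∘ Sum.inl))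
          + ((P *ᵥ y) ∘ Sum.inl) ⬝ᵥ Rp *ᵥ ((P *ᵥ x) ∘ Sum.inl)
          + (Dxm *ᵥ ((P *ᵥ y) ∘ Sum.inr)) ⬝ᵥ Hm *ᵥ (Dxm *ᵥ ((P *ᵥ x) ∘ Sum.inr))
          + (Dym *ᵥ ((P *ᵥ y) ∘ Sum.inr)) ⬝ᵥ Hm *ᵥ (Dym *ᵥ ((P *ᵥ x) ∘ Sum.inr))
          + ((P *ᵥ y) ∘ Sum.inr) ⬝ᵥ Rm *ᵥ ((P *ᵥ x) ∘ Sum.inr)) := by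
    intro x y
    obtain ⟨hI1, hI2⟩ := hIface y
    have c0 : Hbar * fromBlocks DLp 0 0 DLm = fromBlocks (Hp * DLp) 0 0 (Hm * DLm) := by
      rw [hHbar, fromBlocks_multiply]
      simp
    have c1 : Hbar * SATBC1 =
        -(fromBlocks (ewpᵀ * Hwp * dwp) 0 0 (ewmᵀ * Hwm * dwm)
          + fromBlocks (eepᵀ * Hep * dep) 0 0 (eemᵀ * Hem * dem)
          + fromBlocks 0 0 0 (esmᵀ * Hsm * dsm)) := by
      rw [hSATBC1, Matrix.mul_neg, mul_nonsing_inv_cancel_left _ _ hdet]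
    have c2 : Hbar * SATIC = -(fromBlocks (espᵀ * Hsp * dsp) (espᵀ * Hsp * dnm) 0 0) := by
      rw [hSATIC, Matrix.mul_neg, mul_nonsing_inv_cancel_left _ _ hdet]
    have rearr : Hbar * (P * (fromBlocks DLp 0 0 DLm + SATBC1 + SATIC) * P)
        = Pᵀ * ((Hbar * (fromBlocks DLp 0 0 DLm + SATBC1 + SATIC)) * P) := by
      calc Hbar * (P * (fromBlocks DLp 0 0 DLm + SATBC1 + SATIC) * P)
          = (Hbar * P) * ((fromBlocks DLp 0 0 DLm + SATBC1 + SATIC) * P) := by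
            simp only [Matrix.mul_assoc]
        _ = (Pᵀ * Hbar) * ((fromBlocks DLp 0 0 DLm + SATBC1 + SATIC) * P) := by rw [key1]
        _ = Pᵀ * ((Hbar * (fromBlocks DLp 0 0 DLm + SATBC1 + SATIC)) * P) := by
            simp only [Matrix.mul_assoc]
    rw [hD, smul_mulVec, mulVec_smul, dotProduct_smul, smul_eq_mul]
    rw [mulVec_mulVec, rearr, ← mulVec_mulVec, dotProduct_mulVec, vecMul_transpose,
      ← mulVec_mulVec]
    rw [Matrix.mul_add, Matrix.mul_add, c0, c1, c2]
    simp only [add_mulVec, Matrix.neg_mulVec, dotProduct_add, dotProduct_neg]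
    rw [dot_fromBlocks (Hp * DLp) 0 0 (Hm * DLm)]
    rw [dot_fromBlocks (ewpᵀ * Hwp * dwp) 0 0 (ewmᵀ * Hwm * dwm)]
    rw [dot_fromBlocks (eepᵀ * Hep * dep) 0 0 (eemᵀ * Hem * dem)]
    rw [dot_fromBlocks 0 0 0 (esmᵀ * Hsm * dsm)]
    rw [dot_fromBlocks (espᵀ * Hsp * dsp) (espᵀ * Hsp * dnm) 0 0]
    simp only [zero_mulVec, dotProduct_zero, add_zero, zero_add]
    simp only [dot_triple]
    rw [hSBPp ((P *ᵥ y) ∘ Sum.inl) ((P *ᵥ x) ∘ Sum.inl),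
      hSBPm ((P *ᵥ y) ∘ Sum.inr) ((P *ᵥ x) ∘ Sum.inr)]
    rw [hI1, hI2, hmatch]
    simp only [zero_dotProduct, dotProduct_zero]
    ring
  -- the E-part identity
  have hEpart : ∀ y : Fin Np ⊕ Fin Nm → ℝ,
      y ⬝ᵥ Hbar *ᵥ (E *ᵥ y) =
        -c *
          ((ewp *ᵥ ((P *ᵥ y) ∘ Sum.inl)) ⬝ᵥ Hwp *ᵥ (ewp *ᵥ ((P *ᵥ y) ∘ Sum.inl))
          + (eep *ᵥ ((P *ᵥ y) ∘ Sum.inl)) ⬝ᵥ Hep *ᵥ (eep *ᵥ ((P *ᵥ y) ∘ Sum.inl))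
          + (ewm *ᵥ ((P *ᵥ y) ∘ Sum.inr)) ⬝ᵥ Hwm *ᵥ (ewm *ᵥ ((P *ᵥ y) ∘ Sum.inr))
          + (eem *ᵥ ((P *ᵥ y) ∘ Sum.inr)) ⬝ᵥ Hem *ᵥ (eem *ᵥ ((P *ᵥ y) ∘ Sum.inr))) := by
    intro y
    have c3 : Hbar * SATBC2 =
        -(fromBlocks (ewpᵀ * Hwp * ewp) 0 0 (ewmᵀ * Hwm * ewm)
          + fromBlocks (eepᵀ * Hep * eep) 0 0 (eemᵀ * Hem * eem)) := by
      rw [hSATBC2, Matrix.mul_neg, mul_nonsing_inv_cancel_left _ _ hdet]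
    have rearr : Hbar * (P * SATBC2 * P) = Pᵀ * ((Hbar * SATBC2) * P) := by
      calc Hbar * (P * SATBC2 * P) = (Hbar * P) * (SATBC2 * P) := by
            simp only [Matrix.mul_assoc]
        _ = (Pᵀ * Hbar) * (SATBC2 * P) := by rw [key1]
        _ = Pᵀ * ((Hbar * SATBC2) * P) := by simp only [Matrix.mul_assoc]
    rw [hE, smul_mulVec, mulVec_smul, dotProduct_smul, smul_eq_mul]
    rw [mulVec_mulVec, rearr, ← mulVec_mulVec, dotProduct_mulVec, vecMul_transpose,
      ← mulVec_mulVec]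
    rw [c3]
    simp only [add_mulVec, Matrix.neg_mulVec, dotProduct_add, dotProduct_neg]
    rw [dot_fromBlocks (ewpᵀ * Hwp * ewp) 0 0 (ewmᵀ * Hwm * ewm)]
    rw [dot_fromBlocks (eepᵀ * Hep * eep) 0 0 (eemᵀ * Hem * eem)]
    simp only [zero_mulVec, dotProduct_zero, add_zero, zero_add]
    simp only [dot_triple]
    ring
  -- differentiability of w and deriv w
  have hw1 : Differentiable ℝ w := hw.differentiable (by norm_num)
  have hw2 : Differentiable ℝ (deriv w) := by
    have h2 : ContDiff ℝ (1 + 1 : ℕ) w := by exact_mod_cast hw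
    exact ((contDiff_succ_iff_deriv (n := 1)).mp (by exact_mod_cast h2)).2.2.differentiable
      one_ne_zero
  -- main per-time computation
  have hmain : ∀ t : ℝ, DifferentiableAt ℝ En t ∧
      deriv En t =
        -(2 * c) *
          ((ewp *ᵥ ((P *ᵥ deriv w t) ∘ Sum.inl)) ⬝ᵥ Hwp *ᵥ (ewp *ᵥ ((P *ᵥ deriv w t) ∘ Sum.inl))
          + (eep *ᵥ ((P *ᵥ deriv w t) ∘ Sum.inl)) ⬝ᵥ Hep *ᵥ (eep *ᵥ ((P *ᵥ deriv w t) ∘ Sum.inl))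
          + (ewm *ᵥ ((P *ᵥ deriv w t) ∘ Sum.inr)) ⬝ᵥ Hwm *ᵥ (ewm *ᵥ ((P *ᵥ deriv w t) ∘ Sum.inr))
          + (eem *ᵥ ((P *ᵥ deriv w t) ∘ Sum.inr)) ⬝ᵥ Hem *ᵥ
              (eem *ᵥ ((P *ᵥ deriv w t) ∘ Sum.inr))) := by
    intro t
    have hyD : ∀ i, HasDerivAt (fun s => w s i) (deriv w t i) t :=
      hasDerivAt_pi.mp (hw1 t).hasDerivAt
    have hzD : ∀ i, HasDerivAt (fun s => deriv w s i) (deriv (deriv w) t i) t :=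
      hasDerivAt_pi.mp (hw2 t).hasDerivAt
    have hPa : ∀ j, HasDerivAt (fun s => ((P *ᵥ w s) ∘ Sum.inl) j)
        (((P *ᵥ deriv w t) ∘ Sum.inl) j) t := fun j => aux_mulVec P hyD (Sum.inl j)
    have hPb : ∀ j, HasDerivAt (fun s => ((P *ᵥ w s) ∘ Sum.inr) j)
        (((P *ᵥ deriv w t) ∘ Sum.inr) j) t := fun j => aux_mulVec P hyD (Sum.inr j)
    have h0 : HasDerivAt (fun s => deriv w s ⬝ᵥ Hbar *ᵥ deriv w s)
        (deriv (deriv w) t ⬝ᵥ Hbar *ᵥ deriv w t + deriv w t ⬝ᵥ Hbar *ᵥ deriv (deriv w) t) t :=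
      aux_dot Hbar hzD hzD
    have hA1 : HasDerivAt
        (fun s => (Dxp *ᵥ ((P *ᵥ w s) ∘ Sum.inl)) ⬝ᵥ Hp *ᵥ (Dxp *ᵥ ((P *ᵥ w s) ∘ Sum.inl)))
        ((Dxp *ᵥ ((P *ᵥ deriv w t) ∘ Sum.inl)) ⬝ᵥ Hp *ᵥ (Dxp *ᵥ ((P *ᵥ w t) ∘ Sum.inl))
          + (Dxp *ᵥ ((P *ᵥ w t) ∘ Sum.inl)) ⬝ᵥ Hp *ᵥ (Dxp *ᵥ ((P *ᵥ deriv w t) ∘ Sum.inl))) t :=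
      aux_dot Hp (fun i => aux_mulVec Dxp hPa i) (fun i => aux_mulVec Dxp hPa i)
    have hA2 : HasDerivAt
        (fun s => (Dyp *ᵥ ((P *ᵥ w s) ∘ Sum.inl)) ⬝ᵥ Hp *ᵥ (Dyp *ᵥ ((P *ᵥ w s) ∘ Sum.inl)))
        ((Dyp *ᵥ ((P *ᵥ deriv w t) ∘ Sum.inl)) ⬝ᵥ Hp *ᵥ (Dyp *ᵥ ((P *ᵥ w t) ∘ Sum.inl))
          + (Dyp *ᵥ ((P *ᵥ w t) ∘ Sum.inl)) ⬝ᵥ Hp *ᵥ (Dyp *ᵥ ((P *ᵥ deriv w t) ∘ Sum.inl))) t :=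
      aux_dot Hp (fun i => aux_mulVec Dyp hPa i) (fun i => aux_mulVec Dyp hPa i)
    have hA3 : HasDerivAt
        (fun s => ((P *ᵥ w s) ∘ Sum.inl) ⬝ᵥ Rp *ᵥ ((P *ᵥ w s) ∘ Sum.inl))
        (((P *ᵥ deriv w t) ∘ Sum.inl) ⬝ᵥ Rp *ᵥ ((P *ᵥ w t) ∘ Sum.inl)
          + ((P *ᵥ w t) ∘ Sum.inl) ⬝ᵥ Rp *ᵥ ((P *ᵥ deriv w t) ∘ Sum.inl)) t :=
      aux_dot Rp hPa hPa
    have hA4 : HasDerivAt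
        (fun s => (Dxm *ᵥ ((P *ᵥ w s) ∘ Sum.inr)) ⬝ᵥ Hm *ᵥ (Dxm *ᵥ ((P *ᵥ w s) ∘ Sum.inr)))
        ((Dxm *ᵥ ((P *ᵥ deriv w t) ∘ Sum.inr)) ⬝ᵥ Hm *ᵥ (Dxm *ᵥ ((P *ᵥ w t) ∘ Sum.inr))
          + (Dxm *ᵥ ((P *ᵥ w t) ∘ Sum.inr)) ⬝ᵥ Hm *ᵥ (Dxm *ᵥ ((P *ᵥ deriv w t) ∘ Sum.inr))) t :=
      aux_dot Hm (fun i => aux_mulVec Dxm hPb i) (fun i => aux_mulVec Dxm hPb i)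
    have hA5 : HasDerivAt
        (fun s => (Dym *ᵥ ((P *ᵥ w s) ∘ Sum.inr)) ⬝ᵥ Hm *ᵥ (Dym *ᵥ ((P *ᵥ w s) ∘ Sum.inr)))
        ((Dym *ᵥ ((P *ᵥ deriv w t) ∘ Sum.inr)) ⬝ᵥ Hm *ᵥ (Dym *ᵥ ((P *ᵥ w t) ∘ Sum.inr))
          + (Dym *ᵥ ((P *ᵥ w t) ∘ Sum.inr)) ⬝ᵥ Hm *ᵥ (Dym *ᵥ ((P *ᵥ deriv w t) ∘ Sum.inr))) t :=
      aux_dot Hm (fun i => aux_mulVec Dym hPb i) (fun i => aux_mulVec Dym hPb i)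
    have hA6 : HasDerivAt
        (fun s => ((P *ᵥ w s) ∘ Sum.inr) ⬝ᵥ Rm *ᵥ ((P *ᵥ w s) ∘ Sum.inr))
        (((P *ᵥ deriv w t) ∘ Sum.inr) ⬝ᵥ Rm *ᵥ ((P *ᵥ w t) ∘ Sum.inr)
          + ((P *ᵥ w t) ∘ Sum.inr) ⬝ᵥ Rm *ᵥ ((P *ᵥ deriv w t) ∘ Sum.inr)) t :=
      aux_dot Rm hPb hPb
    have hEt : HasDerivAt En
        (deriv (deriv w) t ⬝ᵥ Hbar *ᵥ deriv w t + deriv w t ⬝ᵥ Hbar *ᵥ deriv (deriv w) t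
          + c ^ 2 *
            (((Dxp *ᵥ ((P *ᵥ deriv w t) ∘ Sum.inl)) ⬝ᵥ Hp *ᵥ (Dxp *ᵥ ((P *ᵥ w t) ∘ Sum.inl))
              + (Dxp *ᵥ ((P *ᵥ w t) ∘ Sum.inl)) ⬝ᵥ Hp *ᵥ (Dxp *ᵥ ((P *ᵥ deriv w t) ∘ Sum.inl))
              + ((Dyp *ᵥ ((P *ᵥ deriv w t) ∘ Sum.inl)) ⬝ᵥ Hp *ᵥ (Dyp *ᵥ ((P *ᵥ w t) ∘ Sum.inl))
              + (Dyp *ᵥ ((P *ᵥ w t) ∘ Sum.inl)) ⬝ᵥ Hp *ᵥ (Dyp *ᵥ ((P *ᵥ deriv w t) ∘ Sum.inl)))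
              + (((P *ᵥ deriv w t) ∘ Sum.inl) ⬝ᵥ Rp *ᵥ ((P *ᵥ w t) ∘ Sum.inl)
              + ((P *ᵥ w t) ∘ Sum.inl) ⬝ᵥ Rp *ᵥ ((P *ᵥ deriv w t) ∘ Sum.inl)))
            + ((Dxm *ᵥ ((P *ᵥ deriv w t) ∘ Sum.inr)) ⬝ᵥ Hm *ᵥ (Dxm *ᵥ ((P *ᵥ w t) ∘ Sum.inr))
              + (Dxm *ᵥ ((P *ᵥ w t) ∘ Sum.inr)) ⬝ᵥ Hm *ᵥ (Dxm *ᵥ ((P *ᵥ deriv w t) ∘ Sum.inr))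
              + ((Dym *ᵥ ((P *ᵥ deriv w t) ∘ Sum.inr)) ⬝ᵥ Hm *ᵥ (Dym *ᵥ ((P *ᵥ w t) ∘ Sum.inr))
              + (Dym *ᵥ ((P *ᵥ w t) ∘ Sum.inr)) ⬝ᵥ Hm *ᵥ (Dym *ᵥ ((P *ᵥ deriv w t) ∘ Sum.inr)))
              + (((P *ᵥ deriv w t) ∘ Sum.inr) ⬝ᵥ Rm *ᵥ ((P *ᵥ w t) ∘ Sum.inr)
              + ((P *ᵥ w t) ∘ Sum.inr) ⬝ᵥ Rm *ᵥ ((P *ᵥ deriv w t) ∘ Sum.inr))))) t := by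
      rw [hEn]
      exact h0.add ((((hA1.add hA2).add hA3).add ((hA4.add hA5).add hA6)).const_mul (c ^ 2))
    refine ⟨hEt.differentiableAt, ?_⟩
    rw [hEt.deriv, hode t]
    rw [dot_symm hHbarSym (D *ᵥ w t + E *ᵥ deriv w t) (deriv w t)]
    simp only [mulVec_add, dotProduct_add]
    rw [hDpart (w t) (deriv w t), hEpart (deriv w t)]
    rw [dot_symm (show Hp.IsSymm from hHpT) (Dxp *ᵥ ((P *ᵥ w t) ∘ Sum.inl))
        (Dxp *ᵥ ((P *ᵥ deriv w t) ∘ Sum.inl)),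
      dot_symm (show Hp.IsSymm from hHpT) (Dyp *ᵥ ((P *ᵥ w t) ∘ Sum.inl))
        (Dyp *ᵥ ((P *ᵥ deriv w t) ∘ Sum.inl)),
      dot_symm hRp ((P *ᵥ w t) ∘ Sum.inl) ((P *ᵥ deriv w t) ∘ Sum.inl),
      dot_symm (show Hm.IsSymm from hHmT) (Dxm *ᵥ ((P *ᵥ w t) ∘ Sum.inr))
        (Dxm *ᵥ ((P *ᵥ deriv w t) ∘ Sum.inr)),
      dot_symm (show Hm.IsSymm from hHmT) (Dym *ᵥ ((P *ᵥ w t) ∘ Sum.inr))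
        (Dym *ᵥ ((P *ᵥ deriv w t) ∘ Sum.inr)),
      dot_symm hRm ((P *ᵥ w t) ∘ Sum.inr) ((P *ᵥ deriv w t) ∘ Sum.inr)]
    ring
  refine ⟨fun t => (hmain t).2, ?_⟩
  intro hc hRpP hRmP hHwpP hHepP hHwmP hHemP
  constructor
  · intro t
    simp only [hEn]
    have hbar0 : 0 ≤ deriv w t ⬝ᵥ Hbar *ᵥ deriv w t := by
      rw [hHbar, dot_fromBlocks]
      simp only [zero_mulVec, dotProduct_zero, add_zero, zero_add]
      have h1 := psd_nonneg hHp.posSemidef (deriv w t ∘ Sum.inl)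
      have h2 := psd_nonneg hHm.posSemidef (deriv w t ∘ Sum.inr)
      linarith
    have q1 := psd_nonneg hHp.posSemidef (Dxp *ᵥ ((P *ᵥ w t) ∘ Sum.inl))
    have q2 := psd_nonneg hHp.posSemidef (Dyp *ᵥ ((P *ᵥ w t) ∘ Sum.inl))
    have q3 := psd_nonneg hRpP ((P *ᵥ w t) ∘ Sum.inl)
    have q4 := psd_nonneg hHm.posSemidef (Dxm *ᵥ ((P *ᵥ w t) ∘ Sum.inr))
    have q5 := psd_nonneg hHm.posSemidef (Dym *ᵥ ((P *ᵥ w t) ∘ Sum.inr))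
    have q6 := psd_nonneg hRmP ((P *ᵥ w t) ∘ Sum.inr)
    have hc2 : (0:ℝ) ≤ c ^ 2 := sq_nonneg c
    have hprod := mul_nonneg hc2 (by linarith :
      (0:ℝ) ≤ ((Dxp *ᵥ ((P *ᵥ w t) ∘ Sum.inl)) ⬝ᵥ Hp *ᵥ (Dxp *ᵥ ((P *ᵥ w t) ∘ Sum.inl))
          + (Dyp *ᵥ ((P *ᵥ w t) ∘ Sum.inl)) ⬝ᵥ Hp *ᵥ (Dyp *ᵥ ((P *ᵥ w t) ∘ Sum.inl))
          + ((P *ᵥ w t) ∘ Sum.inl) ⬝ᵥ Rp *ᵥ ((P *ᵥ w t) ∘ Sum.inl))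
        + ((Dxm *ᵥ ((P *ᵥ w t) ∘ Sum.inr)) ⬝ᵥ Hm *ᵥ (Dxm *ᵥ ((P *ᵥ w t) ∘ Sum.inr))
          + (Dym *ᵥ ((P *ᵥ w t) ∘ Sum.inr)) ⬝ᵥ Hm *ᵥ (Dym *ᵥ ((P *ᵥ w t) ∘ Sum.inr))
          + ((P *ᵥ w t) ∘ Sum.inr) ⬝ᵥ Rm *ᵥ ((P *ᵥ w t) ∘ Sum.inr)))
    linarith
  · apply antitone_of_deriv_nonpos (fun t => (hmain t).1)
    intro t
    rw [(hmain t).2]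
    have q1 := psd_nonneg hHwpP (ewp *ᵥ ((P *ᵥ deriv w t) ∘ Sum.inl))
    have q2 := psd_nonneg hHepP (eep *ᵥ ((P *ᵥ deriv w t) ∘ Sum.inl))
    have q3 := psd_nonneg hHwmP (ewm *ᵥ ((P *ᵥ deriv w t) ∘ Sum.inr))
    have q4 := psd_nonneg hHemP (eem *ᵥ ((P *ᵥ deriv w t) ∘ Sum.inr))
    have hprod := mul_nonneg (by linarith : (0:ℝ) ≤ 2 * c) (by linarith :
      (0:ℝ) ≤ (ewp *ᵥ ((P *ᵥ deriv w t) ∘ Sum.inl)) ⬝ᵥ Hwp *ᵥ (ewp *ᵥ ((P *ᵥ deriv w t) ∘ Sum.inl))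
          + (eep *ᵥ ((P *ᵥ deriv w t) ∘ Sum.inl)) ⬝ᵥ Hep *ᵥ (eep *ᵥ ((P *ᵥ deriv w t) ∘ Sum.inl))
          + (ewm *ᵥ ((P *ᵥ deriv w t) ∘ Sum.inr)) ⬝ᵥ Hwm *ᵥ (ewm *ᵥ ((P *ᵥ deriv w t) ∘ Sum.inr))
          + (eem *ᵥ ((P *ᵥ deriv w t) ∘ Sum.inr)) ⬝ᵥ Hem *ᵥ (eem *ᵥ ((P *ᵥ deriv w t) ∘ Sum.inr)))
    linarith
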